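/- Assume u ≠ 0 and v ≠ 0. For every saddle point (x,y) of f there exist θ ∈ ℝ \ {0} and ε > 0 such that for all t ∈ (0, ε), f((1−t)·(x,y) + t·(θu, v/θ)) < f(x,y); that is, (θu, v/θ) − (x,y) is a direction of descent pointing from (x,y) toward the global minimum (θu, v/θ). -/

import Mathlib

open scoped Classical
open scoped Topology

/-- The set-valued sign function: `{-1}` for negative, `[-1,1]` at zero, `{1}` for positive. -/
noncomputable def signSet (t : ℝ) : Set ℝ :=
  if t < 0 then {-1} else if 0 < t then {1} else Set.Icc (-1) 1

lemma sdd_sign_mul {t l : ℝ} (h : l ∈ signSet t) : l * t = |t| := by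
  unfold signSet at h
  rcases lt_trichotomy t 0 with ht | ht | ht
  · rw [if_pos ht] at h; rw [Set.mem_singleton_iff] at h
    rw [h, abs_of_neg ht]; ring
  · subst ht; simp
  · rw [if_neg (not_lt.mpr ht.le), if_pos ht] at h
    rw [Set.mem_singleton_iff] at h
    rw [h, abs_of_pos ht]; ring

lemma sdd_sign_abs {t l : ℝ} (h : l ∈ signSet t) : |l| ≤ 1 := by
  unfold signSet at h
  rcases lt_trichotomy t 0 with ht | ht | ht
  · rw [if_pos ht] at h; rw [Set.mem_singleton_iff] at h; rw [h]; simp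
  · subst ht; rw [if_neg (lt_irrefl 0), if_neg (lt_irrefl 0)] at h
    exact abs_le.mpr ⟨h.1, h.2⟩
  · rw [if_neg (not_lt.mpr ht.le), if_pos ht] at h
    rw [Set.mem_singleton_iff] at h; rw [h]; simp

lemma sdd_sum_mul {m n : ℕ} (a : ℝ) (f : Fin m → Fin n → ℝ) :
    ∑ i, ∑ j, a * f i j = a * ∑ i, ∑ j, f i j := by
  simp [Finset.mul_sum]

lemma sdd_master (m n : ℕ) (hm : 1 ≤ m) (hn : 1 ≤ n)
    (u : Fin m → ℝ) (v : Fin n → ℝ) (x : Fin m → ℝ) (y : Fin n → ℝ)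
    (Λ : Matrix (Fin m) (Fin n) ℝ)
    (hmem : ∀ i j, Λ i j ∈ signSet (x i * y j - u i * v j))
    (hrow : ∀ i, ∑ j, Λ i j * y j = 0) (hcol : ∀ j, ∑ i, Λ i j * x i = 0)
    (hF : 0 < ∑ i, ∑ j, |x i * y j - u i * v j|)
    (θ : ℝ) (hθ : θ ≠ 0)
    (halign : ∀ i j, x i * y j - u i * v j = 0 →
      Λ i j * (θ * (u i * y j) + θ⁻¹ * (x i * v j) - 2 * (u i * v j))
        = |θ * (u i * y j) + θ⁻¹ * (x i * v j) - 2 * (u i * v j)|) :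
    ∃ ε > (0:ℝ), ∀ t ∈ Set.Ioo (0:ℝ) ε,
      (∑ i, ∑ j, |((1 - t) • x + t • (θ • u)) i * ((1 - t) • y + t • (θ⁻¹ • v)) j
          - u i * v j|)
        < ∑ i, ∑ j, |x i * y j - u i * v j| := by
  classical
  set c : Fin m → Fin n → ℝ := fun i j => x i * y j - u i * v j with hc_def
  set d : Fin m → Fin n → ℝ :=
    fun i j => θ * (u i * y j) + θ⁻¹ * (x i * v j) - 2 * (u i * v j) with hd_def
  have hΛc : ∀ i j, Λ i j * c i j = |c i j| := fun i j => sdd_sign_mul (hmem i j)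
  have hΛabs : ∀ i j, |Λ i j| ≤ 1 := fun i j => sdd_sign_abs (hmem i j)
  set F := ∑ i, ∑ j, |c i j| with hF_def
  -- basic sums
  have hsum_xy : ∑ i, ∑ j, Λ i j * (x i * y j) = 0 := by
    have h1 : ∀ i, ∑ j, Λ i j * (x i * y j) = x i * ∑ j, Λ i j * y j := by
      intro i; rw [Finset.mul_sum]; exact Finset.sum_congr rfl fun j _ => by ring
    rw [Finset.sum_congr rfl fun i _ => h1 i]
    simp [hrow]
  have hsum_uy : ∑ i, ∑ j, Λ i j * (u i * y j) = 0 := by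
    have h1 : ∀ i, ∑ j, Λ i j * (u i * y j) = u i * ∑ j, Λ i j * y j := by
      intro i; rw [Finset.mul_sum]; exact Finset.sum_congr rfl fun j _ => by ring
    rw [Finset.sum_congr rfl fun i _ => h1 i]
    simp [hrow]
  have hsum_xv : ∑ i, ∑ j, Λ i j * (x i * v j) = 0 := by
    rw [Finset.sum_comm]
    have h1 : ∀ j, ∑ i, Λ i j * (x i * v j) = v j * ∑ i, Λ i j * x i := by
      intro j; rw [Finset.mul_sum]; exact Finset.sum_congr rfl fun i _ => by ring
    rw [Finset.sum_congr rfl fun j _ => h1 j]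
    simp [hcol]
  have hsum_c : ∑ i, ∑ j, Λ i j * c i j = F := by
    rw [hF_def]
    exact Finset.sum_congr rfl fun i _ => Finset.sum_congr rfl fun j _ => hΛc i j
  have hsum_uv : ∑ i, ∑ j, Λ i j * (u i * v j) = -F := by
    have h1 : ∀ i j, Λ i j * (u i * v j) = Λ i j * (x i * y j) - Λ i j * c i j := by
      intro i j; simp only [hc_def]; ring
    calc ∑ i, ∑ j, Λ i j * (u i * v j)
        = ∑ i, ∑ j, (Λ i j * (x i * y j) - Λ i j * c i j) :=
          Finset.sum_congr rfl fun i _ => Finset.sum_congr rfl fun j _ => h1 i j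
      _ = (∑ i, ∑ j, Λ i j * (x i * y j)) - ∑ i, ∑ j, Λ i j * c i j := by
          simp only [Finset.sum_sub_distrib]
      _ = -F := by rw [hsum_xy, hsum_c]; ring
  have hsum_d : ∑ i, ∑ j, Λ i j * d i j = 2 * F := by
    have h1 : ∀ i j, Λ i j * d i j
        = θ * (Λ i j * (u i * y j)) + θ⁻¹ * (Λ i j * (x i * v j))
          - 2 * (Λ i j * (u i * v j)) := by
      intro i j; simp only [hd_def]; ring
    calc ∑ i, ∑ j, Λ i j * d i j
        = ∑ i, ∑ j, (θ * (Λ i j * (u i * y j)) + θ⁻¹ * (Λ i j * (x i * v j))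
            - 2 * (Λ i j * (u i * v j))) :=
          Finset.sum_congr rfl fun i _ => Finset.sum_congr rfl fun j _ => h1 i j
      _ = (∑ i, ∑ j, θ * (Λ i j * (u i * y j)))
            + (∑ i, ∑ j, θ⁻¹ * (Λ i j * (x i * v j)))
            - ∑ i, ∑ j, 2 * (Λ i j * (u i * v j)) := by
          simp only [Finset.sum_sub_distrib, Finset.sum_add_distrib]
      _ = θ * 0 + θ⁻¹ * 0 - 2 * (-F) := by
          rw [sdd_sum_mul θ, sdd_sum_mul θ⁻¹, sdd_sum_mul 2, hsum_uy, hsum_xv, hsum_uv]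
      _ = 2 * F := by ring
  -- epsilon
  have hne : ((Finset.univ ×ˢ Finset.univ) : Finset (Fin m × Fin n)).Nonempty :=
    ⟨(⟨0, hm⟩, ⟨0, hn⟩), by simp⟩
  set g : Fin m × Fin n → ℝ := fun p =>
    if c p.1 p.2 = 0 then 1 else |c p.1 p.2| / (|c p.1 p.2| + |d p.1 p.2| + 1) with hg_def
  set ε := (Finset.univ ×ˢ Finset.univ : Finset (Fin m × Fin n)).inf' hne g with hε_def
  have hgpos : ∀ p : Fin m × Fin n, 0 < g p := by
    intro p
    simp only [hg_def]
    split
    · exact one_pos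
    · apply div_pos
      · rcases abs_pos.mpr (by assumption : c p.1 p.2 ≠ 0) with h; exact h
      · positivity
  have hεpos : 0 < ε := by
    rw [hε_def, Finset.lt_inf'_iff]
    exact fun p _ => hgpos p
  have hg1 : ∀ p : Fin m × Fin n, g p ≤ 1 := by
    intro p
    simp only [hg_def]
    split
    · exact le_refl 1
    · rw [div_le_one (by positivity)]
      nlinarith [abs_nonneg (d p.1 p.2)]
  have hε1 : ε ≤ 1 := by
    calc ε ≤ g (⟨0, hm⟩, ⟨0, hn⟩) := Finset.inf'_le _ (by simp)
      _ ≤ 1 := hg1 _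
  refine ⟨ε, hεpos, ?_⟩
  rintro t ⟨ht0, htε⟩
  have ht1 : t < 1 := lt_of_lt_of_le htε hε1
  have h1t : 0 < 1 - t := by linarith
  -- pointwise identity
  have hpath : ∀ i j,
      ((1 - t) • x + t • (θ • u)) i * ((1 - t) • y + t • (θ⁻¹ • v)) j - u i * v j
        = (1 - t) ^ 2 * c i j + t * (1 - t) * d i j := by
    intro i j
    have hinv : θ * θ⁻¹ = 1 := mul_inv_cancel₀ hθ
    simp only [Pi.add_apply, Pi.smul_apply, smul_eq_mul, hc_def, hd_def]
    linear_combination (t ^ 2 * u i * v j) * hinv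
  -- pointwise absolute value
  have habs : ∀ i j,
      |(1 - t) ^ 2 * c i j + t * (1 - t) * d i j|
        = Λ i j * ((1 - t) ^ 2 * c i j + t * (1 - t) * d i j) := by
    intro i j
    rcases eq_or_ne (c i j) 0 with hc0 | hc0
    · have hd0 := halign i j hc0
      rw [hc0]
      have : (1 - t) ^ 2 * 0 + t * (1 - t) * d i j = t * (1 - t) * d i j := by ring
      rw [this, abs_mul, abs_of_pos (mul_pos ht0 h1t)]
      calc t * (1 - t) * |d i j| = t * (1 - t) * (Λ i j * d i j) := by rw [hd0]
        _ = Λ i j * (t * (1 - t) * d i j) := by ring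
    · -- t is small compared to |c|
      have hεle : ε ≤ g (i, j) := Finset.inf'_le _ (by simp)
      have hgval : g (i, j) = |c i j| / (|c i j| + |d i j| + 1) := by
        simp only [hg_def]; rw [if_neg hc0]
      have hcpos : 0 < |c i j| := abs_pos.mpr hc0
      have hdenom : 0 < |c i j| + |d i j| + 1 := by positivity
      have htlt : t * (|c i j| + |d i j| + 1) < |c i j| := by
        have : t < |c i j| / (|c i j| + |d i j| + 1) := by
          rw [← hgval]; exact lt_of_lt_of_le htε hεle
        exact (lt_div_iff₀ hdenom).mp this
      have hkey : t * |d i j| < (1 - t) * |c i j| := by nlinarith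
      rcases lt_trichotomy (c i j) 0 with hcneg | hczero | hcpos'
      · have hΛ : Λ i j = -1 := by
          have h := hΛc i j
          rw [abs_of_neg hcneg] at h
          exact mul_right_cancel₀ hc0 (by linarith : Λ i j * c i j = (-1) * c i j)
        have hPneg : (1 - t) ^ 2 * c i j + t * (1 - t) * d i j < 0 := by
          have hdle : d i j ≤ |d i j| := le_abs_self _
          have habsc : |c i j| = -c i j := abs_of_neg hcneg
          have e1 : t * (1 - t) * d i j ≤ t * (1 - t) * |d i j| := by
            apply mul_le_mul_of_nonneg_left hdle; positivity
          have e2 : (1 - t) * (t * |d i j|) < (1 - t) * ((1 - t) * |c i j|) :=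
            mul_lt_mul_of_pos_left hkey h1t
          have e3 : t * (1 - t) * |d i j| = (1 - t) * (t * |d i j|) := by ring
          have e4 : (1 - t) * ((1 - t) * |c i j|) = -((1 - t) ^ 2 * c i j) := by
            rw [habsc]; ring
          linarith
        rw [abs_of_neg hPneg, hΛ]; ring
      · exact absurd hczero hc0
      · have hΛ : Λ i j = 1 := by
          have h := hΛc i j
          rw [abs_of_pos hcpos'] at h
          exact mul_right_cancel₀ hc0 (by linarith [h] : Λ i j * c i j = 1 * c i j)
        have hPpos : 0 < (1 - t) ^ 2 * c i j + t * (1 - t) * d i j := by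
          have hdge : -|d i j| ≤ d i j := neg_abs_le _
          have e1 : t * (1 - t) * (-|d i j|) ≤ t * (1 - t) * d i j := by
            apply mul_le_mul_of_nonneg_left hdge; positivity
          have e2 : (1 - t) * (t * |d i j|) < (1 - t) * ((1 - t) * |c i j|) :=
            mul_lt_mul_of_pos_left hkey h1t
          have e3 : t * (1 - t) * (-|d i j|) = -((1 - t) * (t * |d i j|)) := by ring
          have e4 : (1 - t) * ((1 - t) * |c i j|) = (1 - t) ^ 2 * c i j := by
            rw [abs_of_pos hcpos']; ring
          linarith
        rw [abs_of_pos hPpos, hΛ]; ring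
  -- total
  calc ∑ i, ∑ j, |((1 - t) • x + t • (θ • u)) i * ((1 - t) • y + t • (θ⁻¹ • v)) j
          - u i * v j|
      = ∑ i, ∑ j, Λ i j * ((1 - t) ^ 2 * c i j + t * (1 - t) * d i j) := by
        refine Finset.sum_congr rfl fun i _ => Finset.sum_congr rfl fun j _ => ?_
        rw [hpath i j, habs i j]
    _ = (1 - t) ^ 2 * (∑ i, ∑ j, Λ i j * c i j)
          + t * (1 - t) * (∑ i, ∑ j, Λ i j * d i j) := by
        rw [← sdd_sum_mul ((1 - t) ^ 2), ← sdd_sum_mul (t * (1 - t)),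
          ← Finset.sum_add_distrib]
        refine Finset.sum_congr rfl fun i _ => ?_
        rw [← Finset.sum_add_distrib]
        exact Finset.sum_congr rfl fun j _ => by ring
    _ = (1 - t) ^ 2 * F + t * (1 - t) * (2 * F) := by rw [hsum_c, hsum_d]
    _ < F := by
        have h := mul_pos (mul_pos ht0 ht0) hF
        have e : (1 - t) ^ 2 * F + t * (1 - t) * (2 * F) = F - t * t * F := by ring
        linarith

lemma sdd_rsign_mul_self (t : ℝ) : Real.sign t * t = |t| := by
  rcases lt_trichotomy t 0 with ht | ht | ht
  · rw [Real.sign_of_neg ht, abs_of_neg ht]; ring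
  · subst ht; simp
  · rw [Real.sign_of_pos ht, abs_of_pos ht]; ring

lemma sdd_rsign_abs_le (t : ℝ) : |Real.sign t| ≤ 1 := by
  rcases lt_trichotomy t 0 with ht | ht | ht
  · rw [Real.sign_of_neg ht]; simp
  · subst ht; simp [Real.sign_zero]
  · rw [Real.sign_of_pos ht]; simp

lemma sdd_x_eq_zero {m n : ℕ} (u : Fin m → ℝ) (v : Fin n → ℝ) (x : Fin m → ℝ) (y : Fin n → ℝ)
    (Λ : Matrix (Fin m) (Fin n) ℝ)
    (hmem : ∀ i j, Λ i j ∈ signSet (x i * y j - u i * v j))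
    (hcol : ∀ j, ∑ i, Λ i j * x i = 0)
    (j0 : Fin n) (hvj : v j0 = 0) (hyj : y j0 ≠ 0) : ∀ i, x i = 0 := by
  have h0 : ∑ i, |x i * y j0| = 0 := by
    have h1 : ∀ i, |x i * y j0| = Λ i j0 * x i * y j0 := by
      intro i
      have h := sdd_sign_mul (hmem i j0)
      rw [hvj, mul_zero, sub_zero] at h
      rw [← h]; ring
    calc ∑ i, |x i * y j0| = ∑ i, Λ i j0 * x i * y j0 :=
          Finset.sum_congr rfl fun i _ => h1 i
      _ = (∑ i, Λ i j0 * x i) * y j0 := by rw [Finset.sum_mul]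
      _ = 0 := by rw [hcol j0, zero_mul]
  intro i
  have hterm := (Finset.sum_eq_zero_iff_of_nonneg
    (fun i _ => abs_nonneg (x i * y j0))).mp h0 i (Finset.mem_univ i)
  rcases mul_eq_zero.mp (abs_eq_zero.mp hterm) with h | h
  · exact h
  · exact absurd h hyj

lemma sdd_y_eq_zero {m n : ℕ} (u : Fin m → ℝ) (v : Fin n → ℝ) (x : Fin m → ℝ) (y : Fin n → ℝ)
    (Λ : Matrix (Fin m) (Fin n) ℝ)
    (hmem : ∀ i j, Λ i j ∈ signSet (x i * y j - u i * v j))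
    (hrow : ∀ i, ∑ j, Λ i j * y j = 0)
    (i0 : Fin m) (hui : u i0 = 0) (hxi : x i0 ≠ 0) : ∀ j, y j = 0 := by
  have h0 : ∑ j, |x i0 * y j| = 0 := by
    have h1 : ∀ j, |x i0 * y j| = Λ i0 j * y j * x i0 := by
      intro j
      have h := sdd_sign_mul (hmem i0 j)
      rw [hui, zero_mul, sub_zero] at h
      rw [← h]; ring
    calc ∑ j, |x i0 * y j| = ∑ j, Λ i0 j * y j * x i0 :=
          Finset.sum_congr rfl fun j _ => h1 j
      _ = (∑ j, Λ i0 j * y j) * x i0 := by rw [Finset.sum_mul]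
      _ = 0 := by rw [hrow i0, zero_mul]
  intro j
  have hterm := (Finset.sum_eq_zero_iff_of_nonneg
    (fun j _ => abs_nonneg (x i0 * y j))).mp h0 j (Finset.mem_univ j)
  rcases mul_eq_zero.mp (abs_eq_zero.mp hterm) with h | h
  · exact absurd h hxi
  · exact h

noncomputable def sddW {n : ℕ} (v y : Fin n → ℝ) (γ : ℝ) : ℝ :=
  ∑ j, if γ * y j - v j = 0 then 0 else Real.sign (γ * y j - v j) * y j

noncomputable def sddT {n : ℕ} (v y : Fin n → ℝ) (γ : ℝ) : ℝ :=
  ∑ j, if γ * y j - v j = 0 then |y j| else 0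

lemma sddT_nonneg {n : ℕ} (v y : Fin n → ℝ) (γ : ℝ) : 0 ≤ sddT v y γ :=
  Finset.sum_nonneg fun j _ => by split <;> simp [abs_nonneg]

lemma sddT_pos {n : ℕ} (v y : Fin n → ℝ) (γ : ℝ) (j : Fin n)
    (hk : γ * y j - v j = 0) (hy : y j ≠ 0) : 0 < sddT v y γ := by
  have h1 : 0 < |y j| := abs_pos.mpr hy
  have h2 : (if γ * y j - v j = 0 then |y j| else 0) = |y j| := if_pos hk
  calc (0:ℝ) < |y j| := h1
    _ = (if γ * y j - v j = 0 then |y j| else 0) := h2.symm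
    _ ≤ sddT v y γ := Finset.single_le_sum
        (f := fun j => if γ * y j - v j = 0 then |y j| else 0)
        (fun j _ => by split <;> simp [abs_nonneg]) (Finset.mem_univ j)

lemma sdd_slope {n : ℕ} (v y : Fin n → ℝ) (γ γ' : ℝ) (hlt : γ < γ') :
    sddT v y γ + sddT v y γ' ≤ sddW v y γ' - sddW v y γ := by
  have hs : 0 < γ' - γ := sub_pos.mpr hlt
  have I1 : (∑ j, |γ * y j - v j|) + (γ' - γ) * sddW v y γ + (γ' - γ) * sddT v y γ
      ≤ ∑ j, |γ' * y j - v j| := by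
    have term : ∀ j : Fin n,
        |γ * y j - v j|
          + (γ' - γ) * (if γ * y j - v j = 0 then 0 else Real.sign (γ * y j - v j) * y j)
          + (γ' - γ) * (if γ * y j - v j = 0 then |y j| else 0)
        ≤ |γ' * y j - v j| := by
      intro j
      by_cases hk : γ * y j - v j = 0
      · rw [if_pos hk, if_pos hk, hk]
        have hb : γ' * y j - v j = (γ' - γ) * y j := by
          have : v j = γ * y j := by linarith
          rw [this]; ring
        rw [hb, abs_mul, abs_of_pos hs, abs_zero]
        simp
      · rw [if_neg hk, if_neg hk]
        set a := γ * y j - v j with ha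
        have h3 : Real.sign a * a = |a| := sdd_rsign_mul_self a
        have h1 : Real.sign a * (γ' * y j - v j) ≤ |γ' * y j - v j| := by
          calc Real.sign a * (γ' * y j - v j) ≤ |Real.sign a * (γ' * y j - v j)| :=
                le_abs_self _
            _ = |Real.sign a| * |γ' * y j - v j| := abs_mul _ _
            _ ≤ 1 * |γ' * y j - v j| :=
                mul_le_mul_of_nonneg_right (sdd_rsign_abs_le a) (abs_nonneg _)
            _ = |γ' * y j - v j| := one_mul _
        have h4 : Real.sign a * (γ' * y j - v j)
            = Real.sign a * a + (γ' - γ) * (Real.sign a * y j) := by rw [ha]; ring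
        linarith
    calc (∑ j, |γ * y j - v j|) + (γ' - γ) * sddW v y γ + (γ' - γ) * sddT v y γ
        = ∑ j, (|γ * y j - v j|
            + (γ' - γ) * (if γ * y j - v j = 0 then 0 else Real.sign (γ * y j - v j) * y j)
            + (γ' - γ) * (if γ * y j - v j = 0 then |y j| else 0)) := by
          rw [Finset.sum_add_distrib, Finset.sum_add_distrib, ← Finset.mul_sum,
            ← Finset.mul_sum, sddW, sddT]
      _ ≤ ∑ j, |γ' * y j - v j| := Finset.sum_le_sum fun j _ => term j
  have I2 : (∑ j, |γ' * y j - v j|) - (γ' - γ) * sddW v y γ' + (γ' - γ) * sddT v y γ'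
      ≤ ∑ j, |γ * y j - v j| := by
    have term : ∀ j : Fin n,
        |γ' * y j - v j|
          - (γ' - γ) * (if γ' * y j - v j = 0 then 0 else Real.sign (γ' * y j - v j) * y j)
          + (γ' - γ) * (if γ' * y j - v j = 0 then |y j| else 0)
        ≤ |γ * y j - v j| := by
      intro j
      by_cases hk : γ' * y j - v j = 0
      · rw [if_pos hk, if_pos hk, hk]
        have hb : γ * y j - v j = -((γ' - γ) * y j) := by
          have : v j = γ' * y j := by linarith
          rw [this]; ring
        rw [hb, abs_neg, abs_mul, abs_of_pos hs, abs_zero]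
        simp
      · rw [if_neg hk, if_neg hk]
        set a := γ' * y j - v j with ha
        have h3 : Real.sign a * a = |a| := sdd_rsign_mul_self a
        have h1 : Real.sign a * (γ * y j - v j) ≤ |γ * y j - v j| := by
          calc Real.sign a * (γ * y j - v j) ≤ |Real.sign a * (γ * y j - v j)| :=
                le_abs_self _
            _ = |Real.sign a| * |γ * y j - v j| := abs_mul _ _
            _ ≤ 1 * |γ * y j - v j| :=
                mul_le_mul_of_nonneg_right (sdd_rsign_abs_le a) (abs_nonneg _)
            _ = |γ * y j - v j| := one_mul _
        have h4 : Real.sign a * (γ * y j - v j)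
            = Real.sign a * a - (γ' - γ) * (Real.sign a * y j) := by rw [ha]; ring
        linarith
    calc (∑ j, |γ' * y j - v j|) - (γ' - γ) * sddW v y γ' + (γ' - γ) * sddT v y γ'
        = ∑ j, (|γ' * y j - v j|
            - (γ' - γ) * (if γ' * y j - v j = 0 then 0 else Real.sign (γ' * y j - v j) * y j)
            + (γ' - γ) * (if γ' * y j - v j = 0 then |y j| else 0)) := by
          rw [Finset.sum_add_distrib, Finset.sum_sub_distrib, ← Finset.mul_sum,
            ← Finset.mul_sum, sddW, sddT]
      _ ≤ ∑ j, |γ * y j - v j| := Finset.sum_le_sum fun j _ => term j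
  have hsum : (γ' - γ) * (sddT v y γ + sddT v y γ' + sddW v y γ - sddW v y γ')
      ≤ (γ' - γ) * 0 := by
    have hE : (γ' - γ) * (sddT v y γ + sddT v y γ' + sddW v y γ - sddW v y γ')
        = (γ' - γ) * sddT v y γ + (γ' - γ) * sddT v y γ'
          + (γ' - γ) * sddW v y γ - (γ' - γ) * sddW v y γ' := by ring
    rw [hE, mul_zero]
    linarith
  have := le_of_mul_le_mul_left hsum hs
  linarith

/-- Key decomposition of the row equation: for a row `i` with `x i = α * u i`, `u i ≠ 0`,
the kink part of the row sum equals `-(|u i| * sddW v y α)`. -/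
lemma sdd_row_split {m n : ℕ} (u : Fin m → ℝ) (v : Fin n → ℝ) (x : Fin m → ℝ)
    (y : Fin n → ℝ) (Λ : Matrix (Fin m) (Fin n) ℝ)
    (hmem : ∀ i j, Λ i j ∈ signSet (x i * y j - u i * v j))
    (hrow : ∀ i, ∑ j, Λ i j * y j = 0)
    (i : Fin m) (hui : u i ≠ 0) (α : ℝ) (hxα : x i = α * u i) :
    (∑ j, if α * y j - v j = 0 then Λ i j * (u i * y j) else 0)
      = -(|u i| * sddW v y α) := by
  have hre : ∑ j, Λ i j * (u i * y j) = 0 := by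
    have h1 : ∀ j, Λ i j * (u i * y j) = u i * (Λ i j * y j) := fun j => by ring
    rw [Finset.sum_congr rfl fun j _ => h1 j, ← Finset.mul_sum, hrow i, mul_zero]
  have key : ∀ j, Λ i j * (u i * y j)
      = (if α * y j - v j = 0 then Λ i j * (u i * y j)
          else |u i| * (Real.sign (α * y j - v j) * y j)) := by
    intro j
    by_cases hk : α * y j - v j = 0
    · rw [if_pos hk]
    · rw [if_neg hk]
      set w := α * y j - v j with hw
      have hc : x i * y j - u i * v j = u i * w := by rw [hxα, hw]; ring
      have h := sdd_sign_mul (hmem i j)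
      rw [hc, abs_mul] at h
      have h2 : Real.sign w * w = |w| := sdd_rsign_mul_self w
      have h3 : (Λ i j * u i - |u i| * Real.sign w) * w = 0 := by
        have : Λ i j * u i * w = |u i| * (Real.sign w * w) := by
          rw [h2]; rw [← h]; ring
        nlinarith [this]
      rcases mul_eq_zero.mp h3 with h4 | h4
      · have h5 : Λ i j * u i = |u i| * Real.sign w := by linarith
        calc Λ i j * (u i * y j) = (Λ i j * u i) * y j := by ring
          _ = (|u i| * Real.sign w) * y j := by rw [h5]
          _ = |u i| * (Real.sign w * y j) := by ring
      · exact absurd h4 hk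
  have hsplit : ∀ j, (if α * y j - v j = 0 then Λ i j * (u i * y j)
        else |u i| * (Real.sign (α * y j - v j) * y j))
      = (if α * y j - v j = 0 then Λ i j * (u i * y j) else 0)
        + (|u i| * (if α * y j - v j = 0 then 0 else Real.sign (α * y j - v j) * y j)) := by
    intro j; split <;> simp
  have : ∑ j, Λ i j * (u i * y j)
      = (∑ j, if α * y j - v j = 0 then Λ i j * (u i * y j) else 0)
        + |u i| * sddW v y α := by
    calc ∑ j, Λ i j * (u i * y j)
        = ∑ j, ((if α * y j - v j = 0 then Λ i j * (u i * y j) else 0)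
            + (|u i| * (if α * y j - v j = 0 then 0
                else Real.sign (α * y j - v j) * y j))) := by
          exact Finset.sum_congr rfl fun j _ => (key j).trans (hsplit j)
      _ = (∑ j, if α * y j - v j = 0 then Λ i j * (u i * y j) else 0)
          + |u i| * sddW v y α := by
          rw [Finset.sum_add_distrib, ← Finset.mul_sum, sddW]
  rw [this] at hre
  linarith

lemma sdd_rowbound {m n : ℕ} (u : Fin m → ℝ) (v : Fin n → ℝ) (x : Fin m → ℝ)
    (y : Fin n → ℝ) (Λ : Matrix (Fin m) (Fin n) ℝ)
    (hmem : ∀ i j, Λ i j ∈ signSet (x i * y j - u i * v j))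
    (hrow : ∀ i, ∑ j, Λ i j * y j = 0)
    (i : Fin m) (hui : u i ≠ 0) (α : ℝ) (hxα : x i = α * u i) :
    |sddW v y α| ≤ sddT v y α := by
  have hsplit := sdd_row_split u v x y Λ hmem hrow i hui α hxα
  have habs : |∑ j, if α * y j - v j = 0 then Λ i j * (u i * y j) else 0|
      ≤ |u i| * sddT v y α := by
    calc |∑ j, if α * y j - v j = 0 then Λ i j * (u i * y j) else 0|
        ≤ ∑ j, |if α * y j - v j = 0 then Λ i j * (u i * y j) else 0| :=
          Finset.abs_sum_le_sum_abs _ _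
      _ ≤ ∑ j, |u i| * (if α * y j - v j = 0 then |y j| else 0) := by
          refine Finset.sum_le_sum fun j _ => ?_
          by_cases hk : α * y j - v j = 0
          · rw [if_pos hk, if_pos hk, abs_mul, abs_mul]
            have h1 := sdd_sign_abs (hmem i j)
            have h0 : (0:ℝ) ≤ |u i| * |y j| := by positivity
            calc |Λ i j| * (|u i| * |y j|) ≤ 1 * (|u i| * |y j|) :=
                  mul_le_mul_of_nonneg_right h1 h0
              _ = |u i| * |y j| := one_mul _
          · rw [if_neg hk, if_neg hk, abs_zero, mul_zero]
      _ = |u i| * sddT v y α := by rw [← Finset.mul_sum, sddT]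
  rw [hsplit, abs_neg, abs_mul, abs_abs] at habs
  have hu : 0 < |u i| := abs_pos.mpr hui
  exact le_of_mul_le_mul_left habs hu

lemma sdd_force {m n : ℕ} (u : Fin m → ℝ) (v : Fin n → ℝ) (x : Fin m → ℝ)
    (y : Fin n → ℝ) (Λ : Matrix (Fin m) (Fin n) ℝ)
    (hmem : ∀ i j, Λ i j ∈ signSet (x i * y j - u i * v j))
    (hrow : ∀ i, ∑ j, Λ i j * y j = 0)
    (i : Fin m) (hui : u i ≠ 0) (α : ℝ) (hxα : x i = α * u i)
    (e : ℝ) (he : e = 1 ∨ e = -1) (hW : sddW v y α = -(e * sddT v y α)) :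
    ∀ j, α * y j - v j = 0 → Λ i j * (u i * y j) = e * |u i * y j| := by
  have hee : e * e = 1 := by rcases he with h | h <;> rw [h] <;> ring
  have hea : |e| = 1 := by rcases he with h | h <;> rw [h] <;> simp
  have hsplit := sdd_row_split u v x y Λ hmem hrow i hui α hxα
  have hsum : ∑ j, (if α * y j - v j = 0 then e * (Λ i j * (u i * y j)) else 0)
      = ∑ j, (if α * y j - v j = 0 then |u i * y j| else 0) := by
    have lhs : ∑ j, (if α * y j - v j = 0 then e * (Λ i j * (u i * y j)) else 0)
        = e * ∑ j, (if α * y j - v j = 0 then Λ i j * (u i * y j) else 0) := by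
      rw [Finset.mul_sum]
      refine Finset.sum_congr rfl fun j _ => ?_
      split <;> simp
    have rhs : ∑ j, (if α * y j - v j = 0 then |u i * y j| else 0)
        = |u i| * sddT v y α := by
      rw [sddT, Finset.mul_sum]
      refine Finset.sum_congr rfl fun j _ => ?_
      by_cases hk : α * y j - v j = 0
      · rw [if_pos hk, if_pos hk, abs_mul]
      · rw [if_neg hk, if_neg hk, mul_zero]
    rw [lhs, hsplit, hW, rhs]
    linear_combination (|u i| * sddT v y α) * hee
  have hle : ∀ j ∈ Finset.univ, (if α * y j - v j = 0 then e * (Λ i j * (u i * y j)) else 0)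
      ≤ (if α * y j - v j = 0 then |u i * y j| else 0) := by
    intro j _
    by_cases hk : α * y j - v j = 0
    · rw [if_pos hk, if_pos hk]
      have h1 := sdd_sign_abs (hmem i j)
      have h3 := abs_nonneg (u i * y j)
      calc e * (Λ i j * (u i * y j)) ≤ |e * (Λ i j * (u i * y j))| := le_abs_self _
        _ = |e| * (|Λ i j| * |u i * y j|) := by rw [abs_mul, abs_mul]
        _ = |Λ i j| * |u i * y j| := by rw [hea, one_mul]
        _ ≤ 1 * |u i * y j| := mul_le_mul_of_nonneg_right h1 h3
        _ = |u i * y j| := one_mul _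
    · rw [if_neg hk, if_neg hk]
  have hterm := (Finset.sum_eq_sum_iff_of_le hle).mp hsum
  intro j hk
  have h := hterm j (Finset.mem_univ j)
  rw [if_pos hk, if_pos hk] at h
  have : e * (e * (Λ i j * (u i * y j))) = e * |u i * y j| := by rw [h]
  calc Λ i j * (u i * y j) = e * (e * (Λ i j * (u i * y j))) := by
        rw [← mul_assoc e e, hee, one_mul]
    _ = e * |u i * y j| := this

lemma sdd_rsign_mul (a b : ℝ) : Real.sign (a * b) = Real.sign a * Real.sign b := by
  rcases lt_trichotomy a 0 with ha | ha | ha <;>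
    rcases lt_trichotomy b 0 with hb | hb | hb
  · rw [Real.sign_of_pos (mul_pos_of_neg_of_neg ha hb), Real.sign_of_neg ha,
      Real.sign_of_neg hb]; ring
  · subst hb; simp
  · rw [Real.sign_of_neg (mul_neg_of_neg_of_pos ha hb), Real.sign_of_neg ha,
      Real.sign_of_pos hb]; ring
  · subst ha; simp
  · subst ha; simp
  · subst ha; simp
  · rw [Real.sign_of_neg (mul_neg_of_pos_of_neg ha hb), Real.sign_of_pos ha,
      Real.sign_of_neg hb]; ring
  · subst hb; simp
  · rw [Real.sign_of_pos (mul_pos ha hb), Real.sign_of_pos ha, Real.sign_of_pos hb]; ring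

lemma sdd_localmin_B {m n : ℕ} (u : Fin m → ℝ) (v : Fin n → ℝ)
    (x : Fin m → ℝ) (y : Fin n → ℝ) (hx : ∀ i, x i = 0)
    (hKT : |∑ j, if v j = 0 then (0:ℝ) else Real.sign (v j) * y j|
      < ∑ j, if v j = 0 then |y j| else (0:ℝ)) :
    IsLocalMin (fun q : (Fin m → ℝ) × (Fin n → ℝ) =>
      ∑ i, ∑ j, |q.1 i * q.2 j - u i * v j|) (x, y) := by
  classical
  set K := ∑ j, if v j = 0 then (0:ℝ) else Real.sign (v j) * y j with hK
  set T := ∑ j, if v j = 0 then |y j| else (0:ℝ) with hT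
  set G := T - |K| with hG
  have hGpos : 0 < G := by rw [hG]; linarith
  -- the neighborhood
  have hcont : Continuous fun q : (Fin m → ℝ) × (Fin n → ℝ) => ∑ j, |q.2 j - y j| := by
    apply continuous_finset_sum
    intro j _
    exact (((continuous_apply j).comp continuous_snd).sub continuous_const).abs
  have hU : {q : (Fin m → ℝ) × (Fin n → ℝ) | (∑ j, |q.2 j - y j|) < G / 2} ∈ 𝓝 (x, y) := by
    have hopen : IsOpen {q : (Fin m → ℝ) × (Fin n → ℝ) | (∑ j, |q.2 j - y j|) < G / 2} :=
      isOpen_lt hcont continuous_const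
    apply hopen.mem_nhds
    simp only [Set.mem_setOf_eq, sub_self, abs_zero, Finset.sum_const_zero]
    linarith
  apply Filter.eventually_of_mem hU
  intro q hq
  simp only [Set.mem_setOf_eq] at hq
  set ηs := ∑ j, |q.2 j - y j| with hηs
  have hηs_nonneg : 0 ≤ ηs := Finset.sum_nonneg fun j _ => abs_nonneg _
  -- value at the base point
  have hbase : ∑ i, ∑ j, |x i * y j - u i * v j| = ∑ i, ∑ j, |u i * v j| := by
    refine Finset.sum_congr rfl fun i _ => Finset.sum_congr rfl fun j _ => ?_
    rw [hx i, zero_mul, zero_sub, abs_neg]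
  show (∑ i, ∑ j, |x i * y j - u i * v j|) ≤ ∑ i, ∑ j, |q.1 i * q.2 j - u i * v j|
  rw [hbase]
  refine Finset.sum_le_sum fun i _ => ?_
  set δ := q.1 i with hδ
  -- termwise lower bound
  have term : ∀ j, |u i * v j|
      + (if v j = 0 then |δ| * |y j| - |δ| * |q.2 j - y j|
          else -(Real.sign (u i * v j) * (δ * q.2 j)))
      ≤ |δ * q.2 j - u i * v j| := by
    intro j
    by_cases hv : v j = 0
    · rw [if_pos hv, hv, mul_zero, abs_zero, sub_zero, abs_mul]
      have h1 : |y j| - |q.2 j| ≤ |y j - q.2 j| := abs_sub_abs_le_abs_sub _ _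
      have h2 : |y j - q.2 j| = |q.2 j - y j| := abs_sub_comm _ _
      have h3 : |δ| * (|y j| - |q.2 j - y j|) ≤ |δ| * |q.2 j| := by
        apply mul_le_mul_of_nonneg_left _ (abs_nonneg δ)
        linarith
      linarith [h3, mul_sub (|δ|) (|y j|) (|q.2 j - y j|)]
    · rw [if_neg hv]
      set s := Real.sign (u i * v j) with hs
      have h1 : s * (u i * v j) = |u i * v j| := sdd_rsign_mul_self _
      have h2 : -(s * (δ * q.2 j - u i * v j)) ≤ |δ * q.2 j - u i * v j| := by
        calc -(s * (δ * q.2 j - u i * v j)) ≤ |s * (δ * q.2 j - u i * v j)| :=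
              neg_le_abs _
          _ = |s| * |δ * q.2 j - u i * v j| := abs_mul _ _
          _ ≤ 1 * |δ * q.2 j - u i * v j| :=
              mul_le_mul_of_nonneg_right (sdd_rsign_abs_le _) (abs_nonneg _)
          _ = |δ * q.2 j - u i * v j| := one_mul _
      have h3 : -(s * (δ * q.2 j - u i * v j))
          = -(s * (δ * q.2 j)) + s * (u i * v j) := by ring
      linarith
  have hsum := Finset.sum_le_sum fun j (_ : j ∈ Finset.univ) => term j
  rw [Finset.sum_add_distrib] at hsum
  -- it remains to show the sum of the correction terms is nonnegative
  have hcorr : 0 ≤ ∑ j, (if v j = 0 then |δ| * |y j| - |δ| * |q.2 j - y j|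
      else -(Real.sign (u i * v j) * (δ * q.2 j))) := by
    -- pointwise lower bound by a more structured expression
    have hpt : ∀ j, (if v j = 0 then (0:ℝ) else -(Real.sign (u i) * (δ * (Real.sign (v j) * y j))))
        - |δ| * |q.2 j - y j| + (if v j = 0 then |δ| * |y j| else 0)
        ≤ (if v j = 0 then |δ| * |y j| - |δ| * |q.2 j - y j|
            else -(Real.sign (u i * v j) * (δ * q.2 j))) := by
      intro j
      by_cases hv : v j = 0
      · rw [if_pos hv, if_pos hv, if_pos hv]
        exact le_of_eq (by ring)
      · rw [if_neg hv, if_neg hv, if_neg hv]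
        have hsm : Real.sign (u i * v j) = Real.sign (u i) * Real.sign (v j) :=
          sdd_rsign_mul _ _
        have hdec : -(Real.sign (u i * v j) * (δ * q.2 j))
            = -(Real.sign (u i) * (δ * (Real.sign (v j) * y j)))
              - Real.sign (u i * v j) * (δ * (q.2 j - y j)) := by
          rw [hsm]; ring
        have hbd : -(Real.sign (u i * v j) * (δ * (q.2 j - y j))) ≥ -( |δ| * |q.2 j - y j|) := by
          have : Real.sign (u i * v j) * (δ * (q.2 j - y j)) ≤ |δ| * |q.2 j - y j| := by
            calc Real.sign (u i * v j) * (δ * (q.2 j - y j))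
                ≤ |Real.sign (u i * v j) * (δ * (q.2 j - y j))| := le_abs_self _
              _ = |Real.sign (u i * v j)| * (|δ| * |q.2 j - y j|) := by
                  rw [abs_mul, abs_mul]
              _ ≤ 1 * (|δ| * |q.2 j - y j|) := by
                  apply mul_le_mul_of_nonneg_right (sdd_rsign_abs_le _)
                  positivity
              _ = |δ| * |q.2 j - y j| := one_mul _
          linarith
        linarith [hdec, hbd]
    have hsum2 := Finset.sum_le_sum fun j (_ : j ∈ Finset.univ) => hpt j
    rw [Finset.sum_add_distrib, Finset.sum_sub_distrib] at hsum2
    -- evaluate the three pieces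
    have hA : ∑ j, (if v j = 0 then |δ| * |y j| else (0:ℝ)) = |δ| * T := by
      rw [hT, Finset.mul_sum]
      refine Finset.sum_congr rfl fun j _ => ?_
      by_cases hv : v j = 0
      · rw [if_pos hv, if_pos hv]
      · rw [if_neg hv, if_neg hv, mul_zero]
    have hB : ∑ j, |δ| * |q.2 j - y j| = |δ| * ηs := by rw [hηs, Finset.mul_sum]
    have hC : ∑ j, (if v j = 0 then (0:ℝ)
        else -(Real.sign (u i) * (δ * (Real.sign (v j) * y j))))
        = -(Real.sign (u i) * δ) * K := by
      calc ∑ j, (if v j = 0 then (0:ℝ)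
          else -(Real.sign (u i) * (δ * (Real.sign (v j) * y j))))
          = ∑ j, (-(Real.sign (u i) * δ)
              * (if v j = 0 then (0:ℝ) else Real.sign (v j) * y j)) := by
            refine Finset.sum_congr rfl fun j _ => ?_
            by_cases hv : v j = 0
            · rw [if_pos hv, if_pos hv, mul_zero]
            · rw [if_neg hv, if_neg hv]; ring
        _ = -(Real.sign (u i) * δ) * K := by rw [hK, ← Finset.mul_sum]
    rw [hC, hB, hA] at hsum2
    have hsgn : Real.sign (u i) * δ * K ≤ |δ| * |K| := by
      calc Real.sign (u i) * δ * K ≤ |Real.sign (u i) * δ * K| := le_abs_self _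
        _ = |Real.sign (u i)| * (|δ| * |K|) := by rw [abs_mul, abs_mul, mul_assoc]
        _ ≤ 1 * (|δ| * |K|) := by
            apply mul_le_mul_of_nonneg_right (sdd_rsign_abs_le _)
            positivity
        _ = |δ| * |K| := one_mul _
    have h9 : |δ| * ηs ≤ |δ| * (G / 2) := mul_le_mul_of_nonneg_left hq.le (abs_nonneg δ)
    have h10 : |δ| * G = |δ| * T - |δ| * |K| := by rw [hG]; ring
    have h11 : 0 ≤ |δ| * G := mul_nonneg (abs_nonneg δ) hGpos.le
    linarith
  linarith [hsum, hcorr]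

lemma sdd_localmin_B' {m n : ℕ} (u : Fin m → ℝ) (v : Fin n → ℝ)
    (x : Fin m → ℝ) (y : Fin n → ℝ) (hy : ∀ j, y j = 0)
    (hKT : |∑ i, if u i = 0 then (0:ℝ) else Real.sign (u i) * x i|
      < ∑ i, if u i = 0 then |x i| else (0:ℝ)) :
    IsLocalMin (fun q : (Fin m → ℝ) × (Fin n → ℝ) =>
      ∑ i, ∑ j, |q.1 i * q.2 j - u i * v j|) (x, y) := by
  classical
  set K := ∑ i, if u i = 0 then (0:ℝ) else Real.sign (u i) * x i with hK
  set T := ∑ i, if u i = 0 then |x i| else (0:ℝ) with hT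
  set G := T - |K| with hG
  have hGpos : 0 < G := by rw [hG]; linarith
  have hcont : Continuous fun q : (Fin m → ℝ) × (Fin n → ℝ) => ∑ i, |q.1 i - x i| := by
    apply continuous_finset_sum
    intro i _
    exact (((continuous_apply i).comp continuous_fst).sub continuous_const).abs
  have hU : {q : (Fin m → ℝ) × (Fin n → ℝ) | (∑ i, |q.1 i - x i|) < G / 2} ∈ 𝓝 (x, y) := by
    have hopen : IsOpen {q : (Fin m → ℝ) × (Fin n → ℝ) | (∑ i, |q.1 i - x i|) < G / 2} :=
      isOpen_lt hcont continuous_const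
    apply hopen.mem_nhds
    simp only [Set.mem_setOf_eq, sub_self, abs_zero, Finset.sum_const_zero]
    linarith
  apply Filter.eventually_of_mem hU
  intro q hq
  simp only [Set.mem_setOf_eq] at hq
  set ηs := ∑ i, |q.1 i - x i| with hηs
  have hηs_nonneg : 0 ≤ ηs := Finset.sum_nonneg fun i _ => abs_nonneg _
  have hbase : ∑ i, ∑ j, |x i * y j - u i * v j| = ∑ j, ∑ i, |u i * v j| := by
    rw [Finset.sum_comm]
    refine Finset.sum_congr rfl fun j _ => Finset.sum_congr rfl fun i _ => ?_
    rw [hy j, mul_zero, zero_sub, abs_neg]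
  show (∑ i, ∑ j, |x i * y j - u i * v j|) ≤ ∑ i, ∑ j, |q.1 i * q.2 j - u i * v j|
  rw [hbase, Finset.sum_comm (f := fun i j => |q.1 i * q.2 j - u i * v j|)]
  refine Finset.sum_le_sum fun j _ => ?_
  set δ := q.2 j with hδ
  have term : ∀ i, |u i * v j|
      + (if u i = 0 then |δ| * |x i| - |δ| * |q.1 i - x i|
          else -(Real.sign (u i * v j) * (q.1 i * δ)))
      ≤ |q.1 i * δ - u i * v j| := by
    intro i
    by_cases hv : u i = 0
    · rw [if_pos hv, hv, zero_mul, abs_zero, sub_zero, abs_mul]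
      have h1 : |x i| - |q.1 i| ≤ |x i - q.1 i| := abs_sub_abs_le_abs_sub _ _
      have h2 : |x i - q.1 i| = |q.1 i - x i| := abs_sub_comm _ _
      have h3 : |δ| * (|x i| - |q.1 i - x i|) ≤ |δ| * |q.1 i| := by
        apply mul_le_mul_of_nonneg_left _ (abs_nonneg δ)
        linarith
      have h4 : |q.1 i| * |δ| = |δ| * |q.1 i| := mul_comm _ _
      linarith [h3, mul_sub (|δ|) (|x i|) (|q.1 i - x i|)]
    · rw [if_neg hv]
      set s := Real.sign (u i * v j) with hs
      have h1 : s * (u i * v j) = |u i * v j| := sdd_rsign_mul_self _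
      have h2 : -(s * (q.1 i * δ - u i * v j)) ≤ |q.1 i * δ - u i * v j| := by
        calc -(s * (q.1 i * δ - u i * v j)) ≤ |s * (q.1 i * δ - u i * v j)| :=
              neg_le_abs _
          _ = |s| * |q.1 i * δ - u i * v j| := abs_mul _ _
          _ ≤ 1 * |q.1 i * δ - u i * v j| :=
              mul_le_mul_of_nonneg_right (sdd_rsign_abs_le _) (abs_nonneg _)
          _ = |q.1 i * δ - u i * v j| := one_mul _
      have h3 : -(s * (q.1 i * δ - u i * v j))
          = -(s * (q.1 i * δ)) + s * (u i * v j) := by ring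
      linarith
  have hsum := Finset.sum_le_sum fun i (_ : i ∈ Finset.univ) => term i
  rw [Finset.sum_add_distrib] at hsum
  have hcorr : 0 ≤ ∑ i, (if u i = 0 then |δ| * |x i| - |δ| * |q.1 i - x i|
      else -(Real.sign (u i * v j) * (q.1 i * δ))) := by
    have hpt : ∀ i, (if u i = 0 then (0:ℝ)
          else -(Real.sign (v j) * (δ * (Real.sign (u i) * x i))))
        - |δ| * |q.1 i - x i| + (if u i = 0 then |δ| * |x i| else 0)
        ≤ (if u i = 0 then |δ| * |x i| - |δ| * |q.1 i - x i|
            else -(Real.sign (u i * v j) * (q.1 i * δ))) := by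
      intro i
      by_cases hv : u i = 0
      · rw [if_pos hv, if_pos hv, if_pos hv]
        exact le_of_eq (by ring)
      · rw [if_neg hv, if_neg hv, if_neg hv]
        have hsm : Real.sign (u i * v j) = Real.sign (u i) * Real.sign (v j) :=
          sdd_rsign_mul _ _
        have hdec : -(Real.sign (u i * v j) * (q.1 i * δ))
            = -(Real.sign (v j) * (δ * (Real.sign (u i) * x i)))
              - Real.sign (u i * v j) * ((q.1 i - x i) * δ) := by
          rw [hsm]; ring
        have hbd : -(Real.sign (u i * v j) * ((q.1 i - x i) * δ))
            ≥ -(|δ| * |q.1 i - x i|) := by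
          have : Real.sign (u i * v j) * ((q.1 i - x i) * δ) ≤ |δ| * |q.1 i - x i| := by
            calc Real.sign (u i * v j) * ((q.1 i - x i) * δ)
                ≤ |Real.sign (u i * v j) * ((q.1 i - x i) * δ)| := le_abs_self _
              _ = |Real.sign (u i * v j)| * (|q.1 i - x i| * |δ|) := by
                  rw [abs_mul, abs_mul]
              _ ≤ 1 * (|q.1 i - x i| * |δ|) := by
                  apply mul_le_mul_of_nonneg_right (sdd_rsign_abs_le _)
                  positivity
              _ = |δ| * |q.1 i - x i| := by ring
          linarith
        linarith [hdec, hbd]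
    have hsum2 := Finset.sum_le_sum fun i (_ : i ∈ Finset.univ) => hpt i
    rw [Finset.sum_add_distrib, Finset.sum_sub_distrib] at hsum2
    have hA : ∑ i, (if u i = 0 then |δ| * |x i| else (0:ℝ)) = |δ| * T := by
      rw [hT, Finset.mul_sum]
      refine Finset.sum_congr rfl fun i _ => ?_
      by_cases hv : u i = 0
      · rw [if_pos hv, if_pos hv]
      · rw [if_neg hv, if_neg hv, mul_zero]
    have hB : ∑ i, |δ| * |q.1 i - x i| = |δ| * ηs := by rw [hηs, Finset.mul_sum]
    have hC : ∑ i, (if u i = 0 then (0:ℝ)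
        else -(Real.sign (v j) * (δ * (Real.sign (u i) * x i))))
        = -(Real.sign (v j) * δ) * K := by
      calc ∑ i, (if u i = 0 then (0:ℝ)
          else -(Real.sign (v j) * (δ * (Real.sign (u i) * x i))))
          = ∑ i, (-(Real.sign (v j) * δ)
              * (if u i = 0 then (0:ℝ) else Real.sign (u i) * x i)) := by
            refine Finset.sum_congr rfl fun i _ => ?_
            by_cases hv : u i = 0
            · rw [if_pos hv, if_pos hv, mul_zero]
            · rw [if_neg hv, if_neg hv]; ring
        _ = -(Real.sign (v j) * δ) * K := by rw [hK, ← Finset.mul_sum]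
    rw [hC, hB, hA] at hsum2
    have hsgn : Real.sign (v j) * δ * K ≤ |δ| * |K| := by
      calc Real.sign (v j) * δ * K ≤ |Real.sign (v j) * δ * K| := le_abs_self _
        _ = |Real.sign (v j)| * (|δ| * |K|) := by rw [abs_mul, abs_mul, mul_assoc]
        _ ≤ 1 * (|δ| * |K|) := by
            apply mul_le_mul_of_nonneg_right (sdd_rsign_abs_le _)
            positivity
        _ = |δ| * |K| := one_mul _
    have h9 : |δ| * ηs ≤ |δ| * (G / 2) := mul_le_mul_of_nonneg_left hq.le (abs_nonneg δ)
    have h10 : |δ| * G = |δ| * T - |δ| * |K| := by rw [hG]; ring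
    have h11 : 0 ≤ |δ| * G := mul_nonneg (abs_nonneg δ) hGpos.le
    have hsgn' : -(Real.sign (v j) * δ) * K = -(Real.sign (v j) * δ * K) := by ring
    linarith [hsum2, hsgn]
  linarith [hsum, hcorr]

lemma sdd_rsign_neg (t : ℝ) : Real.sign (-t) = -Real.sign t := by
  rcases lt_trichotomy t 0 with ht | ht | ht
  · rw [Real.sign_of_pos (by linarith : (0:ℝ) < -t), Real.sign_of_neg ht]; try ring
  · subst ht; simp
  · rw [Real.sign_of_neg (by linarith : -t < 0), Real.sign_of_pos ht]; try ring

lemma sdd_W0 {n : ℕ} (v y : Fin n → ℝ) :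
    sddW v y 0 = -∑ j, (if v j = 0 then (0:ℝ) else Real.sign (v j) * y j) := by
  rw [sddW, ← Finset.sum_neg_distrib]
  refine Finset.sum_congr rfl fun j _ => ?_
  by_cases hv : v j = 0
  · rw [if_pos (by rw [hv]; ring), if_pos hv, neg_zero]
  · rw [if_neg (by intro h; apply hv; linarith [h] : ¬(0 * y j - v j = 0)), if_neg hv]
    have h1 : 0 * y j - v j = -(v j) := by ring
    rw [h1, sdd_rsign_neg]; ring

lemma sdd_T0 {n : ℕ} (v y : Fin n → ℝ) :
    sddT v y 0 = ∑ j, (if v j = 0 then |y j| else (0:ℝ)) := by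
  rw [sddT]
  refine Finset.sum_congr rfl fun j _ => ?_
  by_cases hv : v j = 0
  · rw [if_pos (by rw [hv]; ring), if_pos hv]
  · rw [if_neg (by intro h; apply hv; linarith [h] : ¬(0 * y j - v j = 0)), if_neg hv]

/-- If `u ≠ 0` and `v ≠ 0`, then every saddle point `(x,y)` of
`f(x,y) = Σᵢ Σⱼ |xᵢ yⱼ − uᵢ vⱼ|` admits a direction of descent pointing toward a global
minimum `(θu, v/θ)`: there are `θ ≠ 0` and `ε > 0` with
`f((1−t)(x,y) + t(θu, v/θ)) < f(x,y)` for all `t ∈ (0, ε)`. -/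
theorem saddle_point_descent_direction (m n : ℕ) (hm : 1 ≤ m) (hn : 1 ≤ n)
    (u : Fin m → ℝ) (v : Fin n → ℝ) (hu : u ≠ 0) (hv : v ≠ 0)
    (x : Fin m → ℝ) (y : Fin n → ℝ)
    (hcrit : ∃ Λ : Matrix (Fin m) (Fin n) ℝ,
      (∀ i j, Λ i j ∈ signSet (x i * y j - u i * v j)) ∧
      (∀ i, ∑ j, Λ i j * y j = 0) ∧ (∀ j, ∑ i, Λ i j * x i = 0))
    (hnotmin : ¬ IsLocalMin (fun q : (Fin m → ℝ) × (Fin n → ℝ) =>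
      ∑ i, ∑ j, |q.1 i * q.2 j - u i * v j|) (x, y)) :
    ∃ θ : ℝ, θ ≠ 0 ∧ ∃ ε > (0:ℝ), ∀ t ∈ Set.Ioo (0:ℝ) ε,
      (∑ i, ∑ j, |((1 - t) • x + t • (θ • u)) i * ((1 - t) • y + t • (θ⁻¹ • v)) j
          - u i * v j|)
        < ∑ i, ∑ j, |x i * y j - u i * v j| := by
  classical
  obtain ⟨Λ, hmem, hrow, hcol⟩ := hcrit
  -- positivity of the value
  have hFnonneg : (0:ℝ) ≤ ∑ i, ∑ j, |x i * y j - u i * v j| :=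
    Finset.sum_nonneg fun i _ => Finset.sum_nonneg fun j _ => abs_nonneg _
  have hFpos : 0 < ∑ i, ∑ j, |x i * y j - u i * v j| := by
    rcases hFnonneg.lt_or_eq with h | h
    · exact h
    · exfalso
      apply hnotmin
      apply Filter.Eventually.of_forall
      intro q
      show (∑ i, ∑ j, |x i * y j - u i * v j|) ≤ ∑ i, ∑ j, |q.1 i * q.2 j - u i * v j|
      rw [← h]
      exact Finset.sum_nonneg fun i _ => Finset.sum_nonneg fun j _ => abs_nonneg _
  obtain ⟨iu, hiu⟩ : ∃ i, u i ≠ 0 := by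
    by_contra h; push_neg at h; exact hu (funext h)
  obtain ⟨jv, hjv⟩ : ∃ j, v j ≠ 0 := by
    by_contra h; push_neg at h; exact hv (funext h)
  suffices hal : ∃ θ : ℝ, θ ≠ 0 ∧ ∀ i j, x i * y j - u i * v j = 0 →
      Λ i j * (θ * (u i * y j) + θ⁻¹ * (x i * v j) - 2 * (u i * v j))
        = |θ * (u i * y j) + θ⁻¹ * (x i * v j) - 2 * (u i * v j)| by
    obtain ⟨θ, hθ, ha⟩ := hal
    exact ⟨θ, hθ, sdd_master m n hm hn u v x y Λ hmem hrow hcol hFpos θ hθ ha⟩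
  by_cases hx0 : ∀ i, x i = 0
  · by_cases hy0 : ∀ j, y j = 0
    · -- Case A : x = 0, y = 0
      refine ⟨1, one_ne_zero, fun i j hc => ?_⟩
      rw [hx0 i, zero_mul, zero_sub, neg_eq_zero] at hc
      have hd : (1:ℝ) * (u i * y j) + (1:ℝ)⁻¹ * (x i * v j) - 2 * (u i * v j)
          = -2 * (u i * v j) := by rw [hx0 i, hy0 j]; ring
      rw [hd, hc]; simp
    · -- Case B : x = 0, y ≠ 0
      have hb : |sddW v y 0| ≤ sddT v y 0 :=
        sdd_rowbound u v x y Λ hmem hrow iu hiu 0 (by rw [hx0 iu, zero_mul])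
      rcases lt_or_ge (|sddW v y 0|) (sddT v y 0) with hlt | hge
      · exfalso
        apply hnotmin
        apply sdd_localmin_B u v x y hx0
        have h1 : |∑ j, (if v j = 0 then (0:ℝ) else Real.sign (v j) * y j)|
            = |sddW v y 0| := by rw [sdd_W0, abs_neg]
        rw [h1, ← sdd_T0 v y]
        exact hlt
      · have heq : sddT v y 0 = |sddW v y 0| := le_antisymm hge hb
        by_cases hT0 : sddT v y 0 = 0
        · refine ⟨1, one_ne_zero, fun i j hc => ?_⟩
          rw [hx0 i, zero_mul, zero_sub, neg_eq_zero] at hc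
          by_cases hui : u i = 0
          · have hd : (1:ℝ) * (u i * y j) + (1:ℝ)⁻¹ * (x i * v j) - 2 * (u i * v j)
                = 0 := by rw [hx0 i, hui]; ring
            rw [hd]; simp
          · have hvj : v j = 0 := (mul_eq_zero.mp hc).resolve_left hui
            have hyj : y j = 0 := by
              have hz := (Finset.sum_eq_zero_iff_of_nonneg
                (fun j (_ : j ∈ Finset.univ) => by
                  split <;> simp [abs_nonneg])).mp hT0 j (Finset.mem_univ j)
              rw [if_pos (by rw [hvj]; ring : (0:ℝ) * y j - v j = 0)] at hz
              exact abs_eq_zero.mp hz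
            have hd : (1:ℝ) * (u i * y j) + (1:ℝ)⁻¹ * (x i * v j) - 2 * (u i * v j)
                = 0 := by rw [hx0 i, hvj, hyj]; ring
            rw [hd]; simp
        · -- forced alignment with e = ±1
          have key : ∀ e : ℝ, e = 1 ∨ e = -1 → sddW v y 0 = -(e * sddT v y 0) →
              ∃ θ : ℝ, θ ≠ 0 ∧ ∀ i j, x i * y j - u i * v j = 0 →
                Λ i j * (θ * (u i * y j) + θ⁻¹ * (x i * v j) - 2 * (u i * v j))
                  = |θ * (u i * y j) + θ⁻¹ * (x i * v j) - 2 * (u i * v j)| := by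
            intro e he hW
            have hea : |e| = 1 := by rcases he with h | h <;> rw [h] <;> simp
            have hene : e ≠ 0 := by rcases he with h | h <;> rw [h] <;> norm_num
            refine ⟨e, hene, fun i j hc => ?_⟩
            rw [hx0 i, zero_mul, zero_sub, neg_eq_zero] at hc
            by_cases hui : u i = 0
            · have hd : e * (u i * y j) + e⁻¹ * (x i * v j) - 2 * (u i * v j) = 0 := by
                rw [hx0 i, hui]; ring
              rw [hd]; simp
            · have hvj : v j = 0 := (mul_eq_zero.mp hc).resolve_left hui
              have hforce := sdd_force u v x y Λ hmem hrow i hui 0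
                (by rw [hx0 i, zero_mul]) e he hW j (by rw [hvj]; ring)
              have hd : e * (u i * y j) + e⁻¹ * (x i * v j) - 2 * (u i * v j)
                  = e * (u i * y j) := by rw [hx0 i, hvj]; ring
              rw [hd]
              calc Λ i j * (e * (u i * y j)) = e * (Λ i j * (u i * y j)) := by ring
                _ = e * (e * |u i * y j|) := by rw [hforce]
                _ = |u i * y j| := by rcases he with h | h <;> rw [h] <;> ring
                _ = |e * (u i * y j)| := by
                    rw [abs_mul e (u i * y j), hea, one_mul]
          rcases abs_cases (sddW v y 0) with ⟨h1, h2⟩ | ⟨h1, h2⟩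
          · exact key (-1) (Or.inr rfl) (by rw [heq, h1]; ring)
          · exact key 1 (Or.inl rfl) (by rw [heq, h1]; ring)
  · by_cases hy0 : ∀ j, y j = 0
    · -- Case B' : y = 0, x ≠ 0
      set Λt : Matrix (Fin n) (Fin m) ℝ := fun j i => Λ i j with hΛt
      have hmemT : ∀ j i, Λt j i ∈ signSet (y j * x i - v j * u i) := by
        intro j i
        have hco : y j * x i - v j * u i = x i * y j - u i * v j := by ring
        rw [hco]; exact hmem i j
      have hrowT : ∀ j, ∑ i, Λt j i * x i = 0 := hcol
      have hb : |sddW u x 0| ≤ sddT u x 0 :=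
        sdd_rowbound v u y x Λt hmemT hrowT jv hjv 0 (by rw [hy0 jv, zero_mul])
      rcases lt_or_ge (|sddW u x 0|) (sddT u x 0) with hlt | hge
      · exfalso
        apply hnotmin
        apply sdd_localmin_B' u v x y hy0
        have h1 : |∑ i, (if u i = 0 then (0:ℝ) else Real.sign (u i) * x i)|
            = |sddW u x 0| := by rw [sdd_W0, abs_neg]
        rw [h1, ← sdd_T0 u x]
        exact hlt
      · have heq : sddT u x 0 = |sddW u x 0| := le_antisymm hge hb
        by_cases hT0 : sddT u x 0 = 0
        · refine ⟨1, one_ne_zero, fun i j hc => ?_⟩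
          rw [hy0 j, mul_zero, zero_sub, neg_eq_zero] at hc
          by_cases hvj : v j = 0
          · have hd : (1:ℝ) * (u i * y j) + (1:ℝ)⁻¹ * (x i * v j) - 2 * (u i * v j)
                = 0 := by rw [hy0 j, hvj]; ring
            rw [hd]; simp
          · have hui : u i = 0 := (mul_eq_zero.mp hc).resolve_right hvj
            have hxi : x i = 0 := by
              have hz := (Finset.sum_eq_zero_iff_of_nonneg
                (fun i (_ : i ∈ Finset.univ) => by
                  split <;> simp [abs_nonneg])).mp hT0 i (Finset.mem_univ i)
              rw [if_pos (by rw [hui]; ring : (0:ℝ) * x i - u i = 0)] at hz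
              exact abs_eq_zero.mp hz
            have hd : (1:ℝ) * (u i * y j) + (1:ℝ)⁻¹ * (x i * v j) - 2 * (u i * v j)
                = 0 := by rw [hy0 j, hui, hxi]; ring
            rw [hd]; simp
        · have key : ∀ e : ℝ, e = 1 ∨ e = -1 → sddW u x 0 = -(e * sddT u x 0) →
              ∃ θ : ℝ, θ ≠ 0 ∧ ∀ i j, x i * y j - u i * v j = 0 →
                Λ i j * (θ * (u i * y j) + θ⁻¹ * (x i * v j) - 2 * (u i * v j))
                  = |θ * (u i * y j) + θ⁻¹ * (x i * v j) - 2 * (u i * v j)| := by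
            intro e he hW
            have hea : |e| = 1 := by rcases he with h | h <;> rw [h] <;> simp
            have hene : e ≠ 0 := by rcases he with h | h <;> rw [h] <;> norm_num
            have hinv : e⁻¹ = e := by rcases he with h | h <;> rw [h] <;> norm_num
            refine ⟨e, hene, fun i j hc => ?_⟩
            rw [hy0 j, mul_zero, zero_sub, neg_eq_zero] at hc
            by_cases hvj : v j = 0
            · have hd : e * (u i * y j) + e⁻¹ * (x i * v j) - 2 * (u i * v j) = 0 := by
                rw [hy0 j, hvj]; ring
              rw [hd]; simp
            · have hui : u i = 0 := (mul_eq_zero.mp hc).resolve_right hvj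
              have hforce := sdd_force v u y x Λt hmemT hrowT j hvj 0
                (by rw [hy0 j, zero_mul]) e he hW i (by rw [hui]; ring)
              have hd : e * (u i * y j) + e⁻¹ * (x i * v j) - 2 * (u i * v j)
                  = e * (x i * v j) := by rw [hy0 j, hui, hinv]; ring
              rw [hd]
              have hΛeq : Λ i j = Λt j i := rfl
              calc Λ i j * (e * (x i * v j)) = e * (Λt j i * (v j * x i)) := by
                    rw [hΛeq]; ring
                _ = e * (e * |v j * x i|) := by rw [hforce]
                _ = |v j * x i| := by rcases he with h | h <;> rw [h] <;> ring
                _ = |e * (x i * v j)| := by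
                    rw [abs_mul e (x i * v j), hea, one_mul, mul_comm (v j) (x i)]
          rcases abs_cases (sddW u x 0) with ⟨h1, h2⟩ | ⟨h1, h2⟩
          · exact key (-1) (Or.inr rfl) (by rw [heq, h1]; ring)
          · exact key 1 (Or.inl rfl) (by rw [heq, h1]; ring)
    · -- Case C : x ≠ 0, y ≠ 0
      push_neg at hx0 hy0
      obtain ⟨ix, hix⟩ := hx0
      obtain ⟨jy, hjy⟩ := hy0
      have hsy : ∀ j, v j = 0 → y j = 0 := by
        intro j hvj
        by_contra hyj
        exact hix (sdd_x_eq_zero u v x y Λ hmem hcol j hvj hyj ix)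
      have hsx : ∀ i, u i = 0 → x i = 0 := by
        intro i hui
        by_contra hxi
        exact hjy (sdd_y_eq_zero u v x y Λ hmem hrow i hui hxi jy)
      have hune : ∀ i, x i ≠ 0 → u i ≠ 0 := fun i hxi hui => hxi (hsx i hui)
      have hxα : ∀ i, u i ≠ 0 → x i = (x i / u i) * u i :=
        fun i hui => (div_mul_cancel₀ (x i) hui).symm
      have hkink : ∀ i j, x i ≠ 0 → x i * y j - u i * v j = 0 →
          (x i / u i) * y j - v j = 0 := by
        intro i j hxi hc
        have hui := hune i hxi
        have h' : u i * ((x i / u i) * y j - v j) = x i * y j - u i * v j := by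
          field_simp
        rw [hc] at h'
        exact (mul_eq_zero.mp h').resolve_left hui
      -- skeleton: reduce alignment to the genuine kink entries
      have skel : ∀ θ : ℝ,
          (∀ i j, x i ≠ 0 → y j ≠ 0 → x i * y j - u i * v j = 0 →
            Λ i j * (θ * (u i * y j) + θ⁻¹ * (x i * v j) - 2 * (u i * v j))
              = |θ * (u i * y j) + θ⁻¹ * (x i * v j) - 2 * (u i * v j)|) →
          ∀ i j, x i * y j - u i * v j = 0 →
            Λ i j * (θ * (u i * y j) + θ⁻¹ * (x i * v j) - 2 * (u i * v j))
              = |θ * (u i * y j) + θ⁻¹ * (x i * v j) - 2 * (u i * v j)| := by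
        intro θ hmain i j hc
        by_cases hxi : x i = 0
        · by_cases hui : u i = 0
          · have hd : θ * (u i * y j) + θ⁻¹ * (x i * v j) - 2 * (u i * v j) = 0 := by
              rw [hxi, hui]; ring
            rw [hd]; simp
          · have hc' : u i * v j = 0 := by
              rw [hxi, zero_mul, zero_sub, neg_eq_zero] at hc; exact hc
            have hvj : v j = 0 := (mul_eq_zero.mp hc').resolve_left hui
            have hyj : y j = 0 := hsy j hvj
            have hd : θ * (u i * y j) + θ⁻¹ * (x i * v j) - 2 * (u i * v j) = 0 := by
              rw [hxi, hvj, hyj]; ring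
            rw [hd]; simp
        · by_cases hyj : y j = 0
          · have hui := hune i hxi
            have hc' : u i * v j = 0 := by
              rw [hyj, mul_zero, zero_sub, neg_eq_zero] at hc; exact hc
            have hvj : v j = 0 := (mul_eq_zero.mp hc').resolve_left hui
            have hd : θ * (u i * y j) + θ⁻¹ * (x i * v j) - 2 * (u i * v j) = 0 := by
              rw [hyj, hvj]; ring
            rw [hd]; simp
          · exact hmain i j hxi hyj hc
      by_cases hP : ∃ i, x i ≠ 0 ∧ sddT v y (x i / u i) ≠ 0
      · obtain ⟨i0, hxi0, hT0⟩ := hP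
        by_cases hQ : ∃ i, x i ≠ 0 ∧ sddT v y (x i / u i) ≠ 0 ∧ x i / u i ≠ x i0 / u i0
        · obtain ⟨i1, hxi1, hT1, hne01⟩ := hQ
          have main : ∀ lo hi : ℝ, lo < hi →
              (∃ a, x a ≠ 0 ∧ x a / u a = lo) → (∃ b, x b ≠ 0 ∧ x b / u b = hi) →
              sddT v y lo ≠ 0 → sddT v y hi ≠ 0 →
              ∃ θ : ℝ, θ ≠ 0 ∧ ∀ i j, x i * y j - u i * v j = 0 →
                Λ i j * (θ * (u i * y j) + θ⁻¹ * (x i * v j) - 2 * (u i * v j))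
                  = |θ * (u i * y j) + θ⁻¹ * (x i * v j) - 2 * (u i * v j)| := by
            rintro lo hi hlohi ⟨a, hxa, ha⟩ ⟨b, hxb, hb⟩ hTlo hThi
            have hua := hune a hxa
            have hub := hune b hxb
            have hblo : |sddW v y lo| ≤ sddT v y lo := by
              rw [← ha]; exact sdd_rowbound u v x y Λ hmem hrow a hua _ (hxα a hua)
            have hbhi : |sddW v y hi| ≤ sddT v y hi := by
              rw [← hb]; exact sdd_rowbound u v x y Λ hmem hrow b hub _ (hxα b hub)
            have hslope := sdd_slope v y lo hi hlohi
            have hTlo' : 0 < sddT v y lo := (sddT_nonneg v y lo).lt_of_ne (Ne.symm hTlo)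
            have hThi' : 0 < sddT v y hi := (sddT_nonneg v y hi).lt_of_ne (Ne.symm hThi)
            have hWlo : sddW v y lo = -sddT v y lo := by
              have e1 := abs_le.mp hblo
              have e2 := abs_le.mp hbhi
              linarith [e1.1, e1.2, e2.1, e2.2]
            have hWhi : sddW v y hi = sddT v y hi := by
              have e1 := abs_le.mp hblo
              have e2 := abs_le.mp hbhi
              linarith [e1.1, e1.2, e2.1, e2.2]
            have hclass : ∀ i j, x i ≠ 0 → y j ≠ 0 → x i * y j - u i * v j = 0 →
                x i / u i = lo ∨ x i / u i = hi := by
              intro i j hxi hyj hc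
              have hui := hune i hxi
              have hk := hkink i j hxi hc
              have hTα : 0 < sddT v y (x i / u i) := sddT_pos v y _ j hk (by exact hyj)
              have hbα : |sddW v y (x i / u i)| ≤ sddT v y (x i / u i) :=
                sdd_rowbound u v x y Λ hmem hrow i hui _ (hxα i hui)
              have hbα' := abs_le.mp hbα
              rcases lt_trichotomy (x i / u i) lo with h | h | h
              · exfalso
                have hs := sdd_slope v y _ lo h
                linarith [hbα'.1, hbα'.2]
              · exact Or.inl h
              · rcases lt_trichotomy (x i / u i) hi with h2 | h2 | h2
                · exfalso
                  have hs1 := sdd_slope v y lo _ h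
                  have hs2 := sdd_slope v y _ hi h2
                  linarith [hbα'.1, hbα'.2]
                · exact Or.inr h2
                · exfalso
                  have hs := sdd_slope v y hi _ h2
                  linarith [hbα'.1, hbα'.2]
            rcases lt_or_ge 0 hi with hhipos | hhinonpos
            · -- θ = hi > 0
              have hθ : hi ≠ 0 := ne_of_gt hhipos
              refine ⟨hi, hθ, skel hi ?_⟩
              intro i j hxi hyj hc
              have hui := hune i hxi
              have hk := hkink i j hxi hc
              have hvj : v j = (x i / u i) * y j := by linarith
              rcases hclass i j hxi hyj hc with hα | hα
              · have hforce := sdd_force u v x y Λ hmem hrow i hui (x i / u i)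
                  (hxα i hui) 1 (Or.inl rfl) (by rw [hα, hWlo]; ring) j hk
                have hd : hi * (u i * y j) + hi⁻¹ * (x i * v j) - 2 * (u i * v j)
                    = (u i * y j) * ((hi - x i / u i) ^ 2 / hi) := by
                  rw [hvj, hxα i hui]; field_simp; ring
                rw [hd]
                calc Λ i j * ((u i * y j) * ((hi - x i / u i) ^ 2 / hi))
                    = (Λ i j * (u i * y j)) * ((hi - x i / u i) ^ 2 / hi) := by ring
                  _ = |u i * y j| * ((hi - x i / u i) ^ 2 / hi) := by
                      rw [hforce, one_mul]
                  _ = |(u i * y j) * ((hi - x i / u i) ^ 2 / hi)| := by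
                      rw [abs_mul (u i * y j) ((hi - x i / u i) ^ 2 / hi), abs_div,
                        abs_of_pos hhipos, abs_of_nonneg (sq_nonneg (hi - x i / u i))]
              · have hd : hi * (u i * y j) + hi⁻¹ * (x i * v j) - 2 * (u i * v j)
                    = 0 := by
                  rw [hvj, hxα i hui, hα]; field_simp; ring
                rw [hd]; simp
            · -- θ = lo < 0
              have hlopos : lo < 0 := lt_of_lt_of_le hlohi hhinonpos
              have hθ : lo ≠ 0 := ne_of_lt hlopos
              refine ⟨lo, hθ, skel lo ?_⟩
              intro i j hxi hyj hc
              have hui := hune i hxi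
              have hk := hkink i j hxi hc
              have hvj : v j = (x i / u i) * y j := by linarith
              rcases hclass i j hxi hyj hc with hα | hα
              · have hd : lo * (u i * y j) + lo⁻¹ * (x i * v j) - 2 * (u i * v j)
                    = 0 := by
                  rw [hvj, hxα i hui, hα]; field_simp; ring
                rw [hd]; simp
              · have hforce := sdd_force u v x y Λ hmem hrow i hui (x i / u i)
                  (hxα i hui) (-1) (Or.inr rfl) (by rw [hα, hWhi]; ring) j hk
                have hd : lo * (u i * y j) + lo⁻¹ * (x i * v j) - 2 * (u i * v j)
                    = (u i * y j) * ((lo - x i / u i) ^ 2 / lo) := by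
                  rw [hvj, hxα i hui]; field_simp; ring
                rw [hd]
                calc Λ i j * ((u i * y j) * ((lo - x i / u i) ^ 2 / lo))
                    = (Λ i j * (u i * y j)) * ((lo - x i / u i) ^ 2 / lo) := by ring
                  _ = (-1 * |u i * y j|) * ((lo - x i / u i) ^ 2 / lo) := by
                      rw [hforce]
                  _ = |u i * y j| * ((lo - x i / u i) ^ 2 / (-lo)) := by
                      field_simp
                  _ = |(u i * y j) * ((lo - x i / u i) ^ 2 / lo)| := by
                      rw [abs_mul (u i * y j) ((lo - x i / u i) ^ 2 / lo), abs_div,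
                        abs_of_neg hlopos, abs_of_nonneg (sq_nonneg (lo - x i / u i))]
          rcases (Ne.lt_or_gt hne01) with hlt | hlt
          · exact main (x i1 / u i1) (x i0 / u i0) hlt ⟨i1, hxi1, rfl⟩
              ⟨i0, hxi0, rfl⟩ hT1 hT0
          · exact main (x i0 / u i0) (x i1 / u i1) hlt ⟨i0, hxi0, rfl⟩
              ⟨i1, hxi1, rfl⟩ hT0 hT1
        · -- single class: θ = x i0 / u i0
          push_neg at hQ
          have hθ : x i0 / u i0 ≠ 0 := div_ne_zero hxi0 (hune i0 hxi0)
          refine ⟨x i0 / u i0, hθ, skel (x i0 / u i0) ?_⟩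
          intro i j hxi hyj hc
          have hui := hune i hxi
          have hk := hkink i j hxi hc
          have hvj : v j = (x i / u i) * y j := by linarith
          have hTα : sddT v y (x i / u i) ≠ 0 :=
            (sddT_pos v y _ j hk hyj).ne'
          have hα : x i / u i = x i0 / u i0 := hQ i hxi hTα
          have hd : (x i0 / u i0) * (u i * y j) + (x i0 / u i0)⁻¹ * (x i * v j)
              - 2 * (u i * v j) = 0 := by
            rw [← hα, hvj, hxα i hui]; field_simp; ring
          rw [hd]; simp
      · -- no class at all: θ = 1
        push_neg at hP
        refine ⟨1, one_ne_zero, skel 1 ?_⟩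
        intro i j hxi hyj hc
        exfalso
        have hk := hkink i j hxi hc
        exact (sddT_pos v y _ j hk hyj).ne' (hP i hxi)
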